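/- The function f : (1, ∞) → ℝ defined by f(x) = J(s_b(x); x, 1) / J(s_a(x); x, 1) is differentiable with f′(x) < 0 for all x > 1 (in particular f is strictly decreasing), f(x) → +∞ as x → 1⁺, and f(x) → 1 as x → +∞. -/

import Mathlib

open Filter Real Set

/-- The map `J(s; c0, c1) = (c1*s + c0) * ((s+1)/s)^(1/θ)` for real `s`,
using the real power of the positive quantity `(s+1)/s`. -/
noncomputable def Jmap (θ c0 c1 s : ℝ) : ℝ :=
  (c1 * s + c0) * ((s + 1) / s) ^ (1 / θ)

/-- `s_a(x) = (1−θ)/(2θ) − (1/(2θ))·√(4θx + (1−θ)²)`. -/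
noncomputable def sA (θ r : ℝ) : ℝ :=
  (1 - θ) / (2 * θ) - 1 / (2 * θ) * Real.sqrt (4 * θ * r + (1 - θ) ^ 2)

/-- `s_b(x) = (1−θ)/(2θ) + (1/(2θ))·√(4θx + (1−θ)²)`. -/
noncomputable def sB (θ r : ℝ) : ℝ :=
  (1 - θ) / (2 * θ) + 1 / (2 * θ) * Real.sqrt (4 * θ * r + (1 - θ) ^ 2)

/-- `f(x) = J(s_b(x); x, 1) / J(s_a(x); x, 1)` for `x > 1`. -/
noncomputable def fratio (θ x : ℝ) : ℝ :=
  Jmap θ x 1 (sB θ x) / Jmap θ x 1 (sA θ x)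

namespace Stmt1Aux

variable {θ x s' : ℝ}

lemma disc_pos (hθ : 0 < θ) (hx : 1 < x) : 0 < 4 * θ * x + (1 - θ) ^ 2 := by nlinarith

lemma sqrt_gt (hθ : 0 < θ) (hx : 1 < x) :
    1 + θ < Real.sqrt (4 * θ * x + (1 - θ) ^ 2) := by
  rw [Real.lt_sqrt (by linarith : (0:ℝ) ≤ 1 + θ)]
  nlinarith

lemma sB_eq : sB θ x = ((1 - θ) + Real.sqrt (4 * θ * x + (1 - θ) ^ 2)) / (2 * θ) := by
  unfold sB; ring

lemma sA_eq : sA θ x = ((1 - θ) - Real.sqrt (4 * θ * x + (1 - θ) ^ 2)) / (2 * θ) := by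
  unfold sA; ring

lemma sB_pos (hθ : 0 < θ) (hx : 1 < x) : 0 < sB θ x := by
  have h := sqrt_gt hθ hx
  rw [sB_eq]
  exact div_pos (by linarith) (by linarith)

lemma sA_lt (hθ : 0 < θ) (hx : 1 < x) : sA θ x < -1 := by
  have h := sqrt_gt hθ hx
  rw [sA_eq, div_lt_iff₀ (by linarith : (0:ℝ) < 2 * θ)]
  linarith

lemma quadB (hθ : 0 < θ) (hx : 1 < x) :
    sB θ x + x = θ * (sB θ x * (sB θ x + 1)) := by
  have h2 : Real.sqrt (4 * θ * x + (1 - θ) ^ 2) ^ 2 = 4 * θ * x + (1 - θ) ^ 2 :=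
    Real.sq_sqrt (disc_pos hθ hx).le
  have h2' : Real.sqrt (θ * 4 * x + (1 - θ) ^ 2) ^ 2 = θ * 4 * x + (1 - θ) ^ 2 := by
    rw [mul_comm θ 4]; exact h2
  rw [sB_eq]
  have hne : (2 * θ) ≠ 0 := by positivity
  field_simp
  nlinarith [h2, h2']

lemma quadA (hθ : 0 < θ) (hx : 1 < x) :
    sA θ x + x = θ * (sA θ x * (sA θ x + 1)) := by
  have h2 : Real.sqrt (4 * θ * x + (1 - θ) ^ 2) ^ 2 = 4 * θ * x + (1 - θ) ^ 2 :=
    Real.sq_sqrt (disc_pos hθ hx).le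
  have h2' : Real.sqrt (θ * 4 * x + (1 - θ) ^ 2) ^ 2 = θ * 4 * x + (1 - θ) ^ 2 := by
    rw [mul_comm θ 4]; exact h2
  rw [sA_eq]
  have hne : (2 * θ) ≠ 0 := by positivity
  field_simp
  nlinarith [h2, h2']

lemma rB_pos (hθ : 0 < θ) (hx : 1 < x) : 0 < (sB θ x + 1) / sB θ x := by
  have h := sB_pos hθ hx
  positivity

lemma rA_pos (hθ : 0 < θ) (hx : 1 < x) : 0 < (sA θ x + 1) / sA θ x := by
  have h := sA_lt hθ hx
  exact div_pos_of_neg_of_neg (by linarith) (by linarith)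

lemma JmapB_eq : (fun y => Jmap θ y 1 (sB θ y)) =
    fun y => (sB θ y + y) * ((sB θ y + 1) / sB θ y) ^ (1 / θ) := by
  funext y; simp [Jmap]

lemma JmapA_eq : (fun y => Jmap θ y 1 (sA θ y)) =
    fun y => (sA θ y + y) * ((sA θ y + 1) / sA θ y) ^ (1 / θ) := by
  funext y; simp [Jmap]

lemma JmapB_pos (hθ : 0 < θ) (hx : 1 < x) : 0 < Jmap θ x 1 (sB θ x) := by
  have h1 := sB_pos hθ hx
  have h2 := rB_pos hθ hx
  have : Jmap θ x 1 (sB θ x) = (sB θ x + x) * ((sB θ x + 1) / sB θ x) ^ (1 / θ) := by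
    simp [Jmap]
  rw [this]
  exact mul_pos (by linarith) (Real.rpow_pos_of_pos h2 _)

lemma JmapA_pos (hθ : 0 < θ) (hx : 1 < x) : 0 < Jmap θ x 1 (sA θ x) := by
  have h1 := sA_lt hθ hx
  have h2 := rA_pos hθ hx
  have h3 : 0 < sA θ x + x := by
    rw [quadA hθ hx]
    exact mul_pos hθ (mul_pos_of_neg_of_neg (by linarith) (by linarith))
  have : Jmap θ x 1 (sA θ x) = (sA θ x + x) * ((sA θ x + 1) / sA θ x) ^ (1 / θ) := by
    simp [Jmap]
  rw [this]
  exact mul_pos h3 (Real.rpow_pos_of_pos h2 _)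

lemma hasDerivAt_sqrt_part (hθ : 0 < θ) (hx : 1 < x) :
    HasDerivAt (fun y => Real.sqrt (4 * θ * y + (1 - θ) ^ 2))
      (2 * θ / Real.sqrt (4 * θ * x + (1 - θ) ^ 2)) x := by
  have hpos : 0 < 4 * θ * x + (1 - θ) ^ 2 := disc_pos hθ hx
  have h1 : HasDerivAt (fun y : ℝ => 4 * θ * y + (1 - θ) ^ 2) (4 * θ) x := by
    simpa using ((hasDerivAt_id x).const_mul (4 * θ)).add_const ((1 - θ) ^ 2)
  have h2 := (Real.hasDerivAt_sqrt hpos.ne').comp x h1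
  refine h2.congr_deriv ?_
  have hs : Real.sqrt (4 * θ * x + (1 - θ) ^ 2) ≠ 0 := by positivity
  field_simp
  ring

lemma hasDerivAt_sB (hθ : 0 < θ) (hx : 1 < x) :
    HasDerivAt (sB θ) (1 / Real.sqrt (4 * θ * x + (1 - θ) ^ 2)) x := by
  have h := ((hasDerivAt_sqrt_part hθ hx).const_mul (1 / (2 * θ))).const_add ((1 - θ) / (2 * θ))
  have hpos : 0 < 4 * θ * x + (1 - θ) ^ 2 := disc_pos hθ hx
  have hs : Real.sqrt (4 * θ * x + (1 - θ) ^ 2) ≠ 0 := by positivity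
  have he : (sB θ) = fun r => (1 - θ) / (2 * θ) + 1 / (2 * θ) *
      Real.sqrt (4 * θ * r + (1 - θ) ^ 2) := rfl
  rw [he]
  refine h.congr_deriv ?_
  field_simp

lemma hasDerivAt_sA (hθ : 0 < θ) (hx : 1 < x) :
    HasDerivAt (sA θ) (-(1 / Real.sqrt (4 * θ * x + (1 - θ) ^ 2))) x := by
  have h := ((hasDerivAt_sqrt_part hθ hx).const_mul (1 / (2 * θ))).const_sub ((1 - θ) / (2 * θ))
  have hpos : 0 < 4 * θ * x + (1 - θ) ^ 2 := disc_pos hθ hx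
  have hs : Real.sqrt (4 * θ * x + (1 - θ) ^ 2) ≠ 0 := by positivity
  have he : (sA θ) = fun r => (1 - θ) / (2 * θ) - 1 / (2 * θ) *
      Real.sqrt (4 * θ * r + (1 - θ) ^ 2) := rfl
  rw [he]
  refine h.congr_deriv ?_
  field_simp

lemma genDeriv (hθ : 0 < θ) {s : ℝ → ℝ} (hs : HasDerivAt s s' x)
    (h0 : s x ≠ 0) (h1 : s x + 1 ≠ 0)
    (hq : s x + x = θ * (s x * (s x + 1))) :
    HasDerivAt (fun y => (s y + y) * ((s y + 1) / s y) ^ (1 / θ))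
      (((s x + 1) / s x) ^ (1 / θ)) x := by
  have hr : (s x + 1) / s x ≠ 0 := div_ne_zero h1 h0
  have hA : HasDerivAt (fun y => s y + y) (s' + 1) x := hs.add (hasDerivAt_id x)
  have hB : HasDerivAt (fun y => (s y + 1) / s y)
      ((s' * s x - (s x + 1) * s') / s x ^ 2) x := (hs.add_const 1).div hs h0
  have hC := hB.rpow_const (p := 1 / θ) (Or.inl hr)
  have hD := hA.mul hC
  refine hD.congr_deriv ?_
  rw [Real.rpow_sub_one hr, hq]
  have hθ' : θ ≠ 0 := hθ.ne'
  field_simp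
  ring

lemma hasDerivAt_JB (hθ : 0 < θ) (hx : 1 < x) :
    HasDerivAt (fun y => Jmap θ y 1 (sB θ y)) (((sB θ x + 1) / sB θ x) ^ (1 / θ)) x := by
  rw [JmapB_eq]
  have h0 := (sB_pos hθ hx).ne'
  exact genDeriv hθ (hasDerivAt_sB hθ hx) h0 (by have := sB_pos hθ hx; linarith) (quadB hθ hx)

lemma hasDerivAt_JA (hθ : 0 < θ) (hx : 1 < x) :
    HasDerivAt (fun y => Jmap θ y 1 (sA θ y)) (((sA θ x + 1) / sA θ x) ^ (1 / θ)) x := by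
  rw [JmapA_eq]
  have h := sA_lt hθ hx
  exact genDeriv hθ (hasDerivAt_sA hθ hx) (by linarith) (by linarith) (quadA hθ hx)

/-- explicit derivative of `fratio θ`. -/
noncomputable def fder (θ x : ℝ) : ℝ :=
  (((sB θ x + 1) / sB θ x) ^ (1 / θ) * Jmap θ x 1 (sA θ x) -
    Jmap θ x 1 (sB θ x) * ((sA θ x + 1) / sA θ x) ^ (1 / θ)) / Jmap θ x 1 (sA θ x) ^ 2

lemma main_deriv (hθ : 0 < θ) (hx : 1 < x) :
    HasDerivAt (fratio θ) (fder θ x) x ∧ fder θ x < 0 := by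
  have hJa := JmapA_pos hθ hx
  have h := (hasDerivAt_JB hθ hx).div (hasDerivAt_JA hθ hx) hJa.ne'
  constructor
  · exact h
  · apply div_neg_of_neg_of_pos _ (by positivity)
    have hb := rB_pos hθ hx
    have ha := rA_pos hθ hx
    have eB : Jmap θ x 1 (sB θ x) = (sB θ x + x) * ((sB θ x + 1) / sB θ x) ^ (1 / θ) := by
      simp [Jmap]
    have eA : Jmap θ x 1 (sA θ x) = (sA θ x + x) * ((sA θ x + 1) / sA θ x) ^ (1 / θ) := by
      simp [Jmap]
    rw [eA, eB]
    have hlt : sA θ x + x < sB θ x + x := by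
      have := sA_lt hθ hx
      have := sB_pos hθ hx
      linarith
    have pb : 0 < ((sB θ x + 1) / sB θ x) ^ (1 / θ) := Real.rpow_pos_of_pos hb _
    have pa : 0 < ((sA θ x + 1) / sA θ x) ^ (1 / θ) := Real.rpow_pos_of_pos ha _
    calc ((sB θ x + 1) / sB θ x) ^ (1 / θ) * ((sA θ x + x) * ((sA θ x + 1) / sA θ x) ^ (1 / θ)) -
          (sB θ x + x) * ((sB θ x + 1) / sB θ x) ^ (1 / θ) * ((sA θ x + 1) / sA θ x) ^ (1 / θ)
        = ((sB θ x + 1) / sB θ x) ^ (1 / θ) * ((sA θ x + 1) / sA θ x) ^ (1 / θ) *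
            ((sA θ x + x) - (sB θ x + x)) := by ring
      _ < 0 := mul_neg_of_pos_of_neg (mul_pos pb pa) (by linarith)

lemma sAx_pos (hθ : 0 < θ) (hx : 1 < x) : 0 < sA θ x + x := by
  rw [quadA hθ hx]
  have h := sA_lt hθ hx
  exact mul_pos hθ (mul_pos_of_neg_of_neg (by linarith) (by linarith))

lemma sB_one (hθ : 0 < θ) : sB θ 1 = 1 / θ := by
  have hθ0 : θ ≠ 0 := hθ.ne'
  unfold sB
  rw [show 4 * θ * 1 + (1 - θ) ^ 2 = (1 + θ) ^ 2 by ring, Real.sqrt_sq (by linarith)]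
  field_simp
  ring

lemma sA_one (hθ : 0 < θ) : sA θ 1 = -1 := by
  have hθ0 : θ ≠ 0 := hθ.ne'
  unfold sA
  rw [show 4 * θ * 1 + (1 - θ) ^ 2 = (1 + θ) ^ 2 by ring, Real.sqrt_sq (by linarith)]
  field_simp
  ring

lemma cont_sB : Continuous (sB θ) := by
  unfold sB
  exact continuous_const.add (continuous_const.mul (Real.continuous_sqrt.comp
    ((continuous_const.mul continuous_id).add continuous_const)))

lemma cont_sA : Continuous (sA θ) := by
  unfold sA
  exact continuous_const.sub (continuous_const.mul (Real.continuous_sqrt.comp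
    ((continuous_const.mul continuous_id).add continuous_const)))

lemma tendsto_one_right (hθ : 0 < θ) :
    Tendsto (fratio θ) (nhdsWithin 1 (Set.Ioi 1)) atTop := by
  have hθ' : (1:ℝ) / θ ≠ 0 := by positivity
  have hsb : Tendsto (sB θ) (nhds 1) (nhds (1 / θ)) := by
    have h := (cont_sB (θ := θ)).tendsto (1:ℝ)
    rwa [sB_one hθ] at h
  have hsa : Tendsto (sA θ) (nhds 1) (nhds (-1)) := by
    have h := (cont_sA (θ := θ)).tendsto (1:ℝ)
    rwa [sA_one hθ] at h
  have hrb : Tendsto (fun x => (sB θ x + 1) / sB θ x) (nhds 1) (nhds (1 + θ)) := by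
    have h := (hsb.add (tendsto_const_nhds (α := ℝ) (x := (1:ℝ)))).div hsb
      (by positivity : (1:ℝ)/θ ≠ 0)
    have he : (1 / θ + 1) / (1 / θ) = 1 + θ := by field_simp
    rwa [he] at h
  have hrbp : Tendsto (fun x => ((sB θ x + 1) / sB θ x) ^ (1 / θ)) (nhds 1)
      (nhds ((1 + θ) ^ (1 / θ))) :=
    ((Real.continuousAt_rpow_const (1 + θ) (1 / θ) (Or.inl (by linarith))).tendsto).comp hrb
  have hnum : Tendsto (fun x => Jmap θ x 1 (sB θ x)) (nhds 1)
      (nhds ((1 / θ + 1) * (1 + θ) ^ (1 / θ))) := by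
    rw [JmapB_eq]
    exact (hsb.add (continuous_id.tendsto (1:ℝ))).mul hrbp
  have hden0 : Tendsto (fun x => Jmap θ x 1 (sA θ x)) (nhds 1) (nhds 0) := by
    rw [JmapA_eq]
    have h1 : Tendsto (fun y => sA θ y + y) (nhds 1) (nhds 0) := by
      have := hsa.add (continuous_id.tendsto (1:ℝ))
      simpa using this
    have hra : Tendsto (fun x => (sA θ x + 1) / sA θ x) (nhds 1) (nhds 0) := by
      have := (hsa.add (tendsto_const_nhds (α := ℝ) (x := (1:ℝ)))).div hsa
        (by norm_num : (-1:ℝ) ≠ 0)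
      simpa [Pi.div_def] using this
    have hrap : Tendsto (fun x => ((sA θ x + 1) / sA θ x) ^ (1 / θ)) (nhds 1) (nhds 0) := by
      have hc := (Real.continuousAt_rpow_const 0 (1 / θ) (Or.inr (by positivity))).tendsto
      have := hc.comp hra
      have hinv : θ⁻¹ ≠ 0 := inv_ne_zero hθ.ne'
      simpa [Function.comp_def, Real.zero_rpow hinv] using this
    simpa using h1.mul hrap
  have hpos : ∀ᶠ y in nhdsWithin 1 (Set.Ioi 1), Jmap θ y 1 (sA θ y) ∈ Set.Ioi (0:ℝ) :=
    eventually_mem_nhdsWithin.mono (fun y hy => JmapA_pos hθ hy)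
  have hdenW : Tendsto (fun x => Jmap θ x 1 (sA θ x)) (nhdsWithin 1 (Set.Ioi 1))
      (nhdsWithin 0 (Set.Ioi 0)) :=
    tendsto_nhdsWithin_of_tendsto_nhds_of_eventually_within _
      (hden0.mono_left nhdsWithin_le_nhds) hpos
  have hinv := tendsto_inv_nhdsGT_zero.comp hdenW
  have hl : 0 < (1 / θ + 1) * (1 + θ) ^ (1 / θ) := by positivity
  have h := Filter.Tendsto.pos_mul_atTop hl (hnum.mono_left nhdsWithin_le_nhds) hinv
  refine h.congr (fun y => ?_)
  simp [fratio, Function.comp, div_eq_mul_inv]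

lemma tendsto_sqrt_div (hθ : 0 < θ) :
    Tendsto (fun x => Real.sqrt (4 * θ * x + (1 - θ) ^ 2) / x) atTop (nhds 0) := by
  have h1 : Tendsto (fun x : ℝ => 4 * θ * x⁻¹ + (1 - θ) ^ 2 * (x⁻¹ * x⁻¹)) atTop (nhds 0) := by
    have := ((tendsto_inv_atTop_zero (𝕜 := ℝ)).const_mul (4 * θ)).add
      (((tendsto_inv_atTop_zero (𝕜 := ℝ)).mul tendsto_inv_atTop_zero).const_mul ((1 - θ) ^ 2))
    simpa using this
  have h2 : Tendsto (fun x : ℝ => Real.sqrt (4 * θ * x⁻¹ + (1 - θ) ^ 2 * (x⁻¹ * x⁻¹)))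
      atTop (nhds 0) := by
    have := (Real.continuous_sqrt.tendsto 0).comp h1
    simpa [Function.comp_def] using this
  apply h2.congr'
  filter_upwards [eventually_gt_atTop (0:ℝ)] with x hx
  have hw : (0:ℝ) ≤ 4 * θ * x + (1 - θ) ^ 2 := by nlinarith
  rw [show 4 * θ * x⁻¹ + (1 - θ) ^ 2 * (x⁻¹ * x⁻¹) = (4 * θ * x + (1 - θ) ^ 2) / x ^ 2 by
    field_simp]
  rw [Real.sqrt_div hw, Real.sqrt_sq hx.le]

lemma tendsto_sB_div (hθ : 0 < θ) : Tendsto (fun x => sB θ x / x) atTop (nhds 0) := by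
  have he : (fun x => sB θ x / x) = fun x =>
      ((1 - θ) / (2 * θ)) * x⁻¹ + (1 / (2 * θ)) * (Real.sqrt (4 * θ * x + (1 - θ) ^ 2) / x) := by
    funext x; unfold sB; ring
  rw [he]
  have := ((tendsto_inv_atTop_zero (𝕜 := ℝ)).const_mul ((1 - θ) / (2 * θ))).add
    ((tendsto_sqrt_div hθ).const_mul (1 / (2 * θ)))
  simpa using this

lemma tendsto_sA_div (hθ : 0 < θ) : Tendsto (fun x => sA θ x / x) atTop (nhds 0) := by
  have he : (fun x => sA θ x / x) = fun x =>
      ((1 - θ) / (2 * θ)) * x⁻¹ - (1 / (2 * θ)) * (Real.sqrt (4 * θ * x + (1 - θ) ^ 2) / x) := by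
    funext x; unfold sA; ring
  rw [he]
  have := ((tendsto_inv_atTop_zero (𝕜 := ℝ)).const_mul ((1 - θ) / (2 * θ))).sub
    ((tendsto_sqrt_div hθ).const_mul (1 / (2 * θ)))
  simpa using this

lemma tendsto_sqrt_atTop (hθ : 0 < θ) :
    Tendsto (fun x => Real.sqrt (4 * θ * x + (1 - θ) ^ 2)) atTop atTop := by
  rw [tendsto_atTop_atTop]
  intro b
  refine ⟨(b ^ 2 + 1) / (4 * θ), fun a ha => ?_⟩
  have h4 : b ^ 2 + 1 ≤ 4 * θ * a := by
    rw [div_le_iff₀ (by positivity : (0:ℝ) < 4 * θ)] at ha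
    linarith
  rcases le_or_gt b 0 with hb | hb
  · exact hb.trans (Real.sqrt_nonneg _)
  · rw [Real.le_sqrt' hb]
    nlinarith

lemma tendsto_sB_atTop (hθ : 0 < θ) : Tendsto (sB θ) atTop atTop := by
  have h := tendsto_atTop_add_const_left atTop ((1 - θ) / (2 * θ))
    ((tendsto_sqrt_atTop hθ).const_mul_atTop (by positivity : (0:ℝ) < 1 / (2 * θ)))
  exact h

lemma tendsto_sA_atBot (hθ : 0 < θ) : Tendsto (sA θ) atTop atBot := by
  have h1 : Tendsto (fun x => -(1 / (2 * θ) * Real.sqrt (4 * θ * x + (1 - θ) ^ 2)))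
      atTop atBot :=
    tendsto_neg_atTop_atBot.comp
      ((tendsto_sqrt_atTop hθ).const_mul_atTop (by positivity : (0:ℝ) < 1 / (2 * θ)))
  have h := tendsto_atBot_add_const_left atTop ((1 - θ) / (2 * θ)) h1
  have he : sA θ = fun x => (1 - θ) / (2 * θ) +
      -(1 / (2 * θ) * Real.sqrt (4 * θ * x + (1 - θ) ^ 2)) := by
    funext x; unfold sA; ring
  rw [he]
  exact h

lemma tendsto_one_top (hθ : 0 < θ) : Tendsto (fratio θ) atTop (nhds 1) := by
  have hθ' : (1:ℝ) / θ ≠ 0 := by positivity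
  have hn : Tendsto (fun x => (sB θ x + x) / x) atTop (nhds 1) := by
    have h := (tendsto_sB_div hθ).add (tendsto_const_nhds (α := ℝ) (x := (1:ℝ)))
    apply Tendsto.congr' _ (by simpa using h)
    filter_upwards [eventually_ne_atTop (0:ℝ)] with x hx
    field_simp
  have hd : Tendsto (fun x => (sA θ x + x) / x) atTop (nhds 1) := by
    have h := (tendsto_sA_div hθ).add (tendsto_const_nhds (α := ℝ) (x := (1:ℝ)))
    apply Tendsto.congr' _ (by simpa using h)
    filter_upwards [eventually_ne_atTop (0:ℝ)] with x hx
    field_simp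
  have hratio : Tendsto (fun x => (sB θ x + x) / (sA θ x + x)) atTop (nhds 1) := by
    have h := hn.div hd one_ne_zero
    apply Tendsto.congr' _ (by simpa using h)
    filter_upwards [eventually_gt_atTop (1:ℝ)] with x hx
    have h0 : x ≠ 0 := by linarith
    have hA := sAx_pos hθ hx
    simp only [Pi.div_apply]
    field_simp
  have hrb : Tendsto (fun x => (sB θ x + 1) / sB θ x) atTop (nhds 1) := by
    have hi : Tendsto (fun x => (sB θ x)⁻¹) atTop (nhds 0) :=
      (tendsto_sB_atTop hθ).inv_tendsto_atTop
    have h := (tendsto_const_nhds (α := ℝ) (x := (1:ℝ))).add hi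
    apply Tendsto.congr' _ (by simpa using h)
    filter_upwards [(tendsto_sB_atTop hθ).eventually_gt_atTop 0] with x hx
    field_simp
  have hra : Tendsto (fun x => (sA θ x + 1) / sA θ x) atTop (nhds 1) := by
    have hneg : Tendsto (fun x => -sA θ x) atTop atTop :=
      tendsto_neg_atBot_atTop.comp (tendsto_sA_atBot hθ)
    have hi0 : Tendsto (fun x => (-sA θ x)⁻¹) atTop (nhds 0) := hneg.inv_tendsto_atTop
    have hi : Tendsto (fun x => (sA θ x)⁻¹) atTop (nhds 0) := by
      have := hi0.neg
      simpa [inv_neg] using this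
    have h := (tendsto_const_nhds (α := ℝ) (x := (1:ℝ))).add hi
    apply Tendsto.congr' _ (by simpa using h)
    filter_upwards [(tendsto_sA_atBot hθ).eventually_lt_atBot (-1)] with x hx
    have h0 : sA θ x ≠ 0 := by linarith
    field_simp
  have hrbp : Tendsto (fun x => ((sB θ x + 1) / sB θ x) ^ (1 / θ)) atTop (nhds 1) := by
    have := ((Real.continuousAt_rpow_const 1 (1 / θ) (Or.inl one_ne_zero)).tendsto).comp hrb
    simpa [Function.comp_def, Real.one_rpow] using this
  have hrap : Tendsto (fun x => ((sA θ x + 1) / sA θ x) ^ (1 / θ)) atTop (nhds 1) := by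
    have := ((Real.continuousAt_rpow_const 1 (1 / θ) (Or.inl one_ne_zero)).tendsto).comp hra
    simpa [Function.comp_def, Real.one_rpow] using this
  have hfr : fratio θ = fun x => ((sB θ x + x) / (sA θ x + x)) *
      (((sB θ x + 1) / sB θ x) ^ (1 / θ) / ((sA θ x + 1) / sA θ x) ^ (1 / θ)) := by
    funext x
    unfold fratio Jmap
    rw [one_mul, one_mul, mul_div_mul_comm]
  rw [hfr]
  have h := hratio.mul (hrbp.div hrap one_ne_zero)
  simpa using h

end Stmt1Aux

open Stmt1Aux in
/-- `f` is differentiable with negative derivative on `(1, ∞)` (hence strictly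
decreasing there), tends to `+∞` as `x → 1⁺`, and tends to `1` as `x → +∞`. -/
theorem stmt1 (θ : ℝ) (hθ : 0 < θ) :
    (∃ f' : ℝ → ℝ, ∀ x, 1 < x → HasDerivAt (fratio θ) (f' x) x ∧ f' x < 0) ∧
    StrictAntiOn (fratio θ) (Set.Ioi 1) ∧
    Filter.Tendsto (fratio θ) (nhdsWithin 1 (Set.Ioi 1)) Filter.atTop ∧
    Filter.Tendsto (fratio θ) Filter.atTop (nhds 1) := by
  refine ⟨⟨fder θ, fun x hx => main_deriv hθ hx⟩, ?_, tendsto_one_right hθ, tendsto_one_top hθ⟩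
  apply strictAntiOn_of_deriv_neg (convex_Ioi 1)
  · exact fun x hx => ((main_deriv hθ hx).1.continuousAt).continuousWithinAt
  · intro x hx
    rw [interior_Ioi] at hx
    rw [(main_deriv hθ hx).1.deriv]
    exact (main_deriv hθ hx).2
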